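/- Let n, m be positive integers, let C ∈ M_n be a non-scalar Hermitian matrix (i.e., C is not a real multiple of the identity), and let A_1, …, A_m ∈ M_n. Then W_C(A_1, …, A_m) is a line segment in ℂ^m (i.e., the convex hull of two points, possibly equal) if and only if there is a Hermitian matrix H ∈ M_n such that A_j ∈ span_ℂ{I, H} for each j = 1, …, m. -/

import Mathlib

open Matrix

/-- The joint `C`-numerical range of a tuple of matrices
`W_C(A_1, …, A_m) = {(tr(C U*A₁U), …, tr(C U*AₘU)) : U unitary} ⊆ ℂ^m`. -/
noncomputable def jointCNumRange {n m : ℕ} (C : Matrix (Fin n) (Fin n) ℂ)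
    (A : Fin m → Matrix (Fin n) (Fin n) ℂ) : Set (Fin m → ℂ) :=
  { p | ∃ U ∈ Matrix.unitaryGroup (Fin n) ℂ, ∀ j, p j = (C * (star U * A j * U)).trace }

section Aux

open Complex Polynomial

variable {n m : ℕ}


lemma star_perm (σ : Equiv.Perm (Fin n)) :
    star (σ.permMatrix ℂ) = (σ⁻¹).permMatrix ℂ := by
  ext i j
  simp only [Equiv.Perm.permMatrix, PEquiv.toMatrix, Equiv.toPEquiv_apply, Matrix.star_apply,
    Matrix.of_apply, Option.mem_def, Option.some.injEq]
  split_ifs with h1 h2 h2 <;> simp_all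
  · exact h2 (by rw [← h1]; simp)
  · exact h1 (by rw [← h2]; simp)

lemma perm_unitary (σ : Equiv.Perm (Fin n)) :
    (σ.permMatrix ℂ) ∈ Matrix.unitaryGroup (Fin n) ℂ := by
  have key : ∀ τ ρ : Equiv.Perm (Fin n),
      (Equiv.Perm.permMatrix ℂ τ) * (Equiv.Perm.permMatrix ℂ ρ)
        = (Equiv.Perm.permMatrix ℂ (τ.trans ρ)) := by
    intro τ ρ
    unfold Equiv.Perm.permMatrix
    rw [← PEquiv.toMatrix_trans, Equiv.toPEquiv_trans]
  have hid : (Equiv.Perm.permMatrix ℂ (1 : Equiv.Perm (Fin n))) = 1 := by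
    unfold Equiv.Perm.permMatrix
    rw [Equiv.Perm.one_def, Equiv.toPEquiv_refl, PEquiv.toMatrix_refl]
  constructor
  · rw [star_perm, key]
    rw [show (σ⁻¹ : Equiv.Perm (Fin n)).trans σ = 1 by ext x; simp, hid]
  · rw [star_perm, key]
    rw [show σ.trans (σ⁻¹ : Equiv.Perm (Fin n)) = 1 by ext x; simp, hid]

lemma const_trace_scalar (hn : 0 < n) {C M : Matrix (Fin n) (Fin n) ℂ}
    (hC : C.IsHermitian) (hCns : ∀ a : ℝ, C ≠ (a : ℂ) • (1 : Matrix (Fin n) (Fin n) ℂ))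
    (hM : M.IsHermitian) (c : ℂ)
    (hconst : ∀ U ∈ Matrix.unitaryGroup (Fin n) ℂ, (C * (star U * M * U)).trace = c) :
    ∃ r : ℝ, M = (r : ℂ) • (1 : Matrix (Fin n) (Fin n) ℂ) := by
  classical
  set V : Matrix (Fin n) (Fin n) ℂ := (hC.eigenvectorUnitary : Matrix (Fin n) (Fin n) ℂ) with hVdef
  set W : Matrix (Fin n) (Fin n) ℂ := (hM.eigenvectorUnitary : Matrix (Fin n) (Fin n) ℂ) with hWdef
  set d : Fin n → ℝ := hC.eigenvalues with hddef
  set μ : Fin n → ℝ := hM.eigenvalues with hμdef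
  have hVmem : V ∈ Matrix.unitaryGroup (Fin n) ℂ := hC.eigenvectorUnitary.2
  have hWmem : W ∈ Matrix.unitaryGroup (Fin n) ℂ := hM.eigenvectorUnitary.2
  have hV1 : star V * V = 1 := hVmem.1
  have hV2 : V * star V = 1 := hVmem.2
  have hW1 : star W * W = 1 := hWmem.1
  have hW2 : W * star W = 1 := hWmem.2
  have hCeq : C = V * diagonal (fun i => (d i : ℂ)) * star V := by
    exact hC.spectral_theorem
  have hMeq : M = W * diagonal (fun i => (μ i : ℂ)) * star W := by
    exact hM.spectral_theorem
  have eV : ∀ X : Matrix (Fin n) (Fin n) ℂ, star V * (V * X) = X := fun X => by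
    rw [← Matrix.mul_assoc, hV1, Matrix.one_mul]
  have eW : ∀ X : Matrix (Fin n) (Fin n) ℂ, star W * (W * X) = X := fun X => by
    rw [← Matrix.mul_assoc, hW1, Matrix.one_mul]
  -- trace over permutation-unitaries
  have hsum : ∀ σ : Equiv.Perm (Fin n), ∑ i, (d i : ℂ) * (μ (σ i) : ℂ) = c := by
    have hστ : ∀ σ : Equiv.Perm (Fin n), ∑ i, (d i : ℂ) * (μ (σ⁻¹ i) : ℂ) = c := by
      intro σ
      set P : Matrix (Fin n) (Fin n) ℂ := σ.permMatrix ℂ with hPdef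
      set U : Matrix (Fin n) (Fin n) ℂ := W * P * star V with hUdef
      have hUmem : U ∈ Matrix.unitaryGroup (Fin n) ℂ :=
        mul_mem (mul_mem hWmem (perm_unitary σ)) (Unitary.star_mem hVmem)
      have hPDP : star P * (diagonal (fun i => (μ i : ℂ)) * P)
          = diagonal (fun i => (μ (σ⁻¹ i) : ℂ)) := by
        rw [hPdef, star_perm, ← Matrix.mul_assoc]
        unfold Equiv.Perm.permMatrix
        rw [PEquiv.toMatrix_toPEquiv_mul, PEquiv.mul_toMatrix_toPEquiv, submatrix_submatrix]
        simp only [Function.comp_id, Function.id_comp]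
        rw [show ⇑σ.symm = ⇑σ⁻¹ from rfl]
        rw [submatrix_diagonal _ _ (Equiv.injective _)]
        rfl
      have hprod : C * (star U * M * U)
          = V * (diagonal (fun i => (d i : ℂ)) * (star P * (diagonal (fun i => (μ i : ℂ)) * P)))
            * star V := by
        rw [hCeq, hMeq, hUdef]
        simp only [Matrix.star_mul, star_star, Matrix.mul_assoc, eV, eW]
      have := hconst U hUmem
      rw [hprod, hPDP] at this
      rw [Matrix.trace_mul_cycle, ← Matrix.mul_assoc, hV1, Matrix.one_mul,
        diagonal_mul_diagonal, trace_diagonal] at this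
      exact this
    intro σ
    simpa using hστ σ⁻¹
  -- C non-scalar gives two distinct eigenvalues
  have ⟨i0, i1, hd01⟩ : ∃ i0 i1 : Fin n, d i0 ≠ d i1 := by
    by_contra h
    push_neg at h
    have i₀ : Fin n := ⟨0, hn⟩
    apply hCns (d ⟨0, hn⟩)
    rw [hCeq]
    have hfun : (fun i => ((d i : ℂ))) = fun _ => ((d ⟨0, hn⟩ : ℂ)) :=
      funext fun i => by rw [h i ⟨0, hn⟩]
    have : (diagonal (fun i => (d i : ℂ))) = (d ⟨0, hn⟩ : ℂ) • 1 := by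
      rw [hfun, Matrix.smul_one_eq_diagonal]
    rw [this]
    rw [Matrix.mul_smul, Matrix.mul_one, Matrix.smul_mul, hV2]
  have hi01 : i0 ≠ i1 := fun h => hd01 (by rw [h])
  -- all eigenvalues of M are equal
  have hμall : ∀ a b : Fin n, μ a = μ b := by
    intro a b
    rcases eq_or_ne a b with rfl | hab
    · rfl
    -- build σ with σ i0 = a, σ i1 = b
    set c1 : Fin n := (Equiv.swap i0 a) i1 with hc1
    have hc1a : c1 ≠ a := by
      rw [hc1]
      intro h
      exact hi01 (Equiv.injective _ (by rw [h, Equiv.swap_apply_left]))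
    set σ : Equiv.Perm (Fin n) := (Equiv.swap i0 a).trans (Equiv.swap c1 b) with hσ
    have hσ0 : σ i0 = a := by
      simp only [hσ, Equiv.trans_apply, Equiv.swap_apply_left]
      exact Equiv.swap_apply_of_ne_of_ne hc1a.symm hab
    have hσ1 : σ i1 = b := by
      simp only [hσ, Equiv.trans_apply, ← hc1, Equiv.swap_apply_left]
    have h1 := hsum σ
    have h2 := hsum ((Equiv.swap i0 i1).trans σ)
    have h3 : ∑ i, (d ((Equiv.swap i0 i1) i) : ℂ) * (μ (σ i) : ℂ)
        = ∑ i, (d i : ℂ) * (μ (σ ((Equiv.swap i0 i1) i)) : ℂ) := by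
      rw [← Equiv.sum_comp (Equiv.swap i0 i1) (fun i => (d ((Equiv.swap i0 i1) i) : ℂ) * (μ (σ i) : ℂ))]
      simp [Equiv.swap_apply_self]
    have h4 : ∑ i, ((d i : ℂ) - (d ((Equiv.swap i0 i1) i) : ℂ)) * (μ (σ i) : ℂ) = 0 := by
      have : ∑ i, (d i : ℂ) * (μ (σ ((Equiv.swap i0 i1) i)) : ℂ) = c := h2
      rw [← h3] at this
      have := h1.trans this.symm
      rw [← sub_eq_zero] at this
      rw [← this, ← Finset.sum_sub_distrib]
      congr 1
      funext i
      ring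
    have h5 : ∑ i ∈ ({i0, i1} : Finset (Fin n)),
        ((d i : ℂ) - (d ((Equiv.swap i0 i1) i) : ℂ)) * (μ (σ i) : ℂ) = 0 := by
      rw [← h4]
      apply Finset.sum_subset (Finset.subset_univ _)
      intro x _ hx
      simp only [Finset.mem_insert, Finset.mem_singleton, not_or] at hx
      rw [Equiv.swap_apply_of_ne_of_ne hx.1 hx.2]
      simp
    rw [Finset.sum_pair hi01, Equiv.swap_apply_left, Equiv.swap_apply_right, hσ0, hσ1] at h5
    have hfac : ((d i0 : ℂ) - (d i1 : ℂ)) * ((μ a : ℂ) - (μ b : ℂ)) = 0 := by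
      rw [← h5]; ring
    have hdne : ((d i0 : ℂ) - (d i1 : ℂ)) ≠ 0 := by
      simpa [sub_eq_zero] using fun h => hd01 (ofReal_injective h)
    have := (mul_eq_zero.mp hfac).resolve_left hdne
    rw [sub_eq_zero] at this
    exact ofReal_injective this
  refine ⟨μ ⟨0, hn⟩, ?_⟩
  rw [hMeq]
  have hfun : (fun i => ((μ i : ℂ))) = fun _ => ((μ ⟨0, hn⟩ : ℂ)) :=
    funext fun i => by rw [hμall i ⟨0, hn⟩]
  have : (diagonal (fun i => (μ i : ℂ))) = (μ ⟨0, hn⟩ : ℂ) • 1 := by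
    rw [hfun, Matrix.smul_one_eq_diagonal]
  rw [this, Matrix.mul_smul, Matrix.mul_one, Matrix.smul_mul, hW2]

lemma circle_infinite : {z : ℂ | ‖z‖ = 1}.Infinite := by
  apply Set.infinite_of_injective_forall_mem (f := fun t : ℝ => (1 + t*I)/(1 - t*I))
  case hi =>
    intro s t h
    have hs : (1 - (s:ℂ)*I) ≠ 0 := by
      intro hc
      have := congrArg Complex.re hc
      simp at this
    have ht : (1 - (t:ℂ)*I) ≠ 0 := by
      intro hc
      have := congrArg Complex.re hc
      simp at this
    rw [div_eq_div_iff hs ht] at h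
    have h2 : (s:ℂ) * I = t * I := by linear_combination h / 2
    have h3 : (s:ℂ) = t := mul_right_cancel₀ I_ne_zero h2
    exact_mod_cast h3
  case hf =>
    intro t
    have ht : (1 - (t:ℂ)*I) ≠ 0 := by
      intro hc
      have := congrArg Complex.re hc
      simp at this
    simp only [Set.mem_setOf_eq, norm_div]
    rw [div_eq_one_iff_eq (norm_ne_zero_iff.mpr ht)]
    have he : (1 + (t:ℂ)*I) = (starRingEnd ℂ) (1 - (t:ℂ)*I) := by
      simp [Complex.ext_iff]
    rw [he, Complex.norm_conj]

lemma exists_good_scalar {n : ℕ} (U : Matrix (Fin n) (Fin n) ℂ)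
    (hU : U ∈ Matrix.unitaryGroup (Fin n) ℂ) :
    ∃ z : ℂ, ‖z‖ = 1 ∧ IsUnit (U + z • (1 : Matrix (Fin n) (Fin n) ℂ)).det := by
  classical
  set P : Polynomial ℂ :=
    (Matrix.of fun i j => Polynomial.C (U i j) + (if i = j then Polynomial.X else 0)).det with hP
  have heval : ∀ z : ℂ, P.eval z = (U + z • (1 : Matrix (Fin n) (Fin n) ℂ)).det := by
    intro z
    rw [hP, ← Polynomial.coe_evalRingHom, RingHom.map_det]
    congr 1
    ext i j
    simp [Matrix.one_apply, Matrix.smul_apply, apply_ite]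
    split_ifs with h
    · exact fun hc => absurd h hc
    · exact fun hc => absurd hc h
  have hP0 : P ≠ 0 := by
    intro h
    have h0 := heval 0
    rw [h, eval_zero] at h0
    have hdU : IsUnit U.det := by
      apply Matrix.isUnit_det_of_right_inverse (B := star U)
      exact hU.2
    rw [isUnit_iff_ne_zero] at hdU
    simp at h0
    exact hdU h0.symm
  have hfin : {z : ℂ | P.IsRoot z}.Finite := P.finite_setOf_isRoot hP0
  have : ¬ ({z : ℂ | ‖z‖ = 1} ⊆ {z : ℂ | P.IsRoot z}) := by
    intro hsub
    exact circle_infinite (hfin.subset hsub)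
  obtain ⟨z, hz1, hz2⟩ := Set.not_subset.mp this
  refine ⟨z, hz1, ?_⟩
  rw [isUnit_iff_ne_zero, ← heval z]
  exact hz2


lemma joinedin_one (U : Matrix (Fin n) (Fin n) ℂ)
    (hU : U ∈ Matrix.unitaryGroup (Fin n) ℂ)
    (hdet : IsUnit (U + 1 : Matrix (Fin n) (Fin n) ℂ).det) :
    JoinedIn (Matrix.unitaryGroup (Fin n) ℂ : Set (Matrix (Fin n) (Fin n) ℂ)) 1 U := by
  classical
  have hU1 : star U * U = 1 := hU.1
  have hdet' : IsUnit (star U + 1 : Matrix (Fin n) (Fin n) ℂ).det := by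
    have : (star U + 1 : Matrix (Fin n) (Fin n) ℂ) = (U + 1)ᴴ := by
      rw [conjTranspose_add, conjTranspose_one]; rfl
    rw [this, Matrix.det_conjTranspose]
    exact hdet.star
  set K : Matrix (Fin n) (Fin n) ℂ := (-I) • ((U - 1) * (U + 1)⁻¹) with hKdef
  have E : (star U - 1) * (U + 1) = -((star U + 1) * (U - 1)) := by
    have e1 : (star U - 1) * (U + 1) = star U * U + star U - U - 1 := by noncomm_ring
    have e2 : (star U + 1) * (U - 1) = star U * U - star U + U - 1 := by noncomm_ring
    rw [e1, e2, hU1]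
    abel
  have hclaim : (star U + 1)⁻¹ * (star U - 1) = -((U - 1) * (U + 1)⁻¹) := by
    calc (star U + 1)⁻¹ * (star U - 1)
        = (star U + 1)⁻¹ * ((star U - 1) * ((U + 1) * (U + 1)⁻¹)) := by
          rw [Matrix.mul_nonsing_inv _ hdet, Matrix.mul_one]
      _ = (star U + 1)⁻¹ * ((star U - 1) * (U + 1)) * (U + 1)⁻¹ := by
          simp only [Matrix.mul_assoc]
      _ = (star U + 1)⁻¹ * (-((star U + 1) * (U - 1))) * (U + 1)⁻¹ := by rw [E]
      _ = -((star U + 1)⁻¹ * (star U + 1) * ((U - 1) * (U + 1)⁻¹)) := by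
          simp only [Matrix.mul_neg, Matrix.neg_mul, Matrix.mul_assoc]
      _ = -((U - 1) * (U + 1)⁻¹) := by
          rw [Matrix.nonsing_inv_mul _ hdet', Matrix.one_mul]
  have hKH : K.IsHermitian := by
    show Kᴴ = K
    rw [hKdef, Matrix.conjTranspose_smul, Matrix.conjTranspose_mul,
      Matrix.conjTranspose_nonsing_inv, conjTranspose_sub, conjTranspose_add,
      conjTranspose_one]
    have : (U ᴴ + 1)⁻¹ * (U ᴴ - 1) = -((U - 1) * (U + 1)⁻¹) := hclaim
    rw [this]
    simp [smul_neg]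
  set W : Matrix (Fin n) (Fin n) ℂ := (hKH.eigenvectorUnitary : Matrix (Fin n) (Fin n) ℂ) with hW
  set dk : Fin n → ℝ := hKH.eigenvalues with hdk
  have hWmem : W ∈ Matrix.unitaryGroup (Fin n) ℂ := hKH.eigenvectorUnitary.2
  have hW1 : star W * W = 1 := hWmem.1
  have hW2 : W * star W = 1 := hWmem.2
  have hKeq : K = W * diagonal (fun k => (dk k : ℂ)) * star W := by
    exact hKH.spectral_theorem
  have hden : ∀ x : ℝ, (1 - (x:ℂ)*I) ≠ 0 := by
    intro x hc
    have := congrArg Complex.re hc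
    simp at this
  have hnum : ∀ x : ℝ, (1 + (x:ℂ)*I) ≠ 0 := by
    intro x hc
    have := congrArg Complex.re hc
    simp at this
  set f : ℝ → Fin n → ℂ :=
    fun s k => (1 + ((s * dk k : ℝ):ℂ)*I) / (1 - ((s * dk k : ℝ):ℂ)*I) with hf
  have hconjf : ∀ s k, (starRingEnd ℂ) (f s k) * f s k = 1 := by
    intro s k
    have hc : (starRingEnd ℂ) (f s k)
        = (1 - ((s * dk k : ℝ):ℂ)*I)/(1 + ((s * dk k : ℝ):ℂ)*I) := by
      rw [hf, map_div₀]
      congr 1 <;> simp [Complex.ext_iff]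
    rw [hc, hf, div_mul_div_comm,
      div_eq_one_iff_eq (mul_ne_zero (hnum _) (hden _))]
    ring
  set γ : ℝ → Matrix (Fin n) (Fin n) ℂ := fun s => W * diagonal (f s) * star W with hγ
  have hdiagmem : ∀ s, diagonal (f s) ∈ Matrix.unitaryGroup (Fin n) ℂ := by
    intro s
    have h1 : star (diagonal (f s)) = diagonal (fun k => (starRingEnd ℂ) (f s k)) := by
      rw [Matrix.star_eq_conjTranspose, diagonal_conjTranspose]
      rfl
    constructor
    · show star (diagonal (f s)) * diagonal (f s) = 1
      rw [h1, diagonal_mul_diagonal]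
      ext i j
      rcases eq_or_ne i j with rfl | hij
      · simp [hconjf s i]
      · simp [Matrix.diagonal_apply_ne _ hij, Matrix.one_apply_ne hij]
    · show diagonal (f s) * star (diagonal (f s)) = 1
      rw [h1, diagonal_mul_diagonal]
      ext i j
      rcases eq_or_ne i j with rfl | hij
      · simp
        rw [mul_comm]
        exact hconjf s i
      · simp [Matrix.diagonal_apply_ne _ hij, Matrix.one_apply_ne hij]
  have hγmem : ∀ s, γ s ∈ Matrix.unitaryGroup (Fin n) ℂ := fun s =>
    mul_mem (mul_mem hWmem (hdiagmem s)) (Unitary.star_mem hWmem)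
  have hγ0 : γ 0 = 1 := by
    have hf0 : f 0 = fun _ => 1 := by
      funext k
      simp [hf]
    show W * diagonal (f 0) * star W = 1
    rw [hf0, diagonal_one, Matrix.mul_one, hW2]
  -- γ 1 = U
  have hiK : I • K = (U - 1) * (U + 1)⁻¹ := by
    rw [hKdef, smul_smul]
    simp [Complex.I_mul_I]
  have hsand : ∀ A B : Matrix (Fin n) (Fin n) ℂ,
      (W * A * star W) * (W * B * star W) = W * (A * B) * star W := by
    intro A B
    have eW : ∀ X : Matrix (Fin n) (Fin n) ℂ, star W * (W * X) = X := fun X => by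
      rw [← Matrix.mul_assoc, hW1, Matrix.one_mul]
    simp only [Matrix.mul_assoc, eW]
  have hdiagK : ∀ c : ℂ, W * diagonal (fun k => 1 + c * (dk k : ℂ) * I) * star W
      = 1 + (c * I) • K := by
    intro c
    have : diagonal (fun k => 1 + c * (dk k : ℂ) * I)
        = 1 + (c * I) • diagonal (fun k => (dk k : ℂ)) := by
      ext i j
      rcases eq_or_ne i j with rfl | hij
      · simp [Matrix.one_apply, Matrix.smul_apply]
        ring
      · simp [Matrix.diagonal_apply_ne _ hij, Matrix.one_apply_ne hij]
    rw [this, Matrix.mul_add, Matrix.add_mul, Matrix.mul_one, hW2, Matrix.mul_smul,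
      Matrix.smul_mul, hKeq]
  have hγ1 : γ 1 = U := by
    have key : γ 1 * (1 - I • K) = 1 + I • K := by
      have h1 : (1 : Matrix (Fin n) (Fin n) ℂ) + I • K
          = W * diagonal (fun k => 1 + (1:ℂ) * (dk k : ℂ) * I) * star W := by
        rw [hdiagK]; rw [one_mul]
      have h2 : (1 : Matrix (Fin n) (Fin n) ℂ) - I • K
          = W * diagonal (fun k => 1 + (-1:ℂ) * (dk k : ℂ) * I) * star W := by
        rw [hdiagK]
        rw [show ((-1:ℂ) * I) • K = -(I • K) by rw [neg_mul, neg_smul, one_mul]]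
        rw [sub_eq_add_neg]
      show W * diagonal (f 1) * star W * _ = _
      rw [h1, h2, hsand, diagonal_mul_diagonal]
      rw [show (fun i => f 1 i * (1 + (-1:ℂ) * (dk i:ℂ) * I))
          = (fun k => 1 + (1:ℂ) * (dk k:ℂ) * I) from funext fun k => by
        show f 1 k * (1 + (-1:ℂ) * (dk k:ℂ) * I) = 1 + (1:ℂ) * (dk k:ℂ) * I
        rw [hf]
        have hd : (1 + (-1:ℂ) * (dk k:ℂ) * I) = (1 - ((1 * dk k : ℝ):ℂ)*I) := by
          push_cast; ring
        rw [hd, div_mul_cancel₀ _ (hden _)]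
        push_cast; ring]
    rw [hiK] at key
    have h1m : (1 : Matrix (Fin n) (Fin n) ℂ) - (U - 1) * (U + 1)⁻¹
        = (2:ℂ) • (U + 1)⁻¹ := by
      nth_rewrite 1 [← Matrix.mul_nonsing_inv _ hdet]
      rw [← Matrix.sub_mul]
      have : (U + 1) - (U - 1) = (2:ℂ) • (1 : Matrix (Fin n) (Fin n) ℂ) := by
        rw [two_smul]; abel
      rw [this, Matrix.smul_mul, Matrix.one_mul]
    have h1p : (1 : Matrix (Fin n) (Fin n) ℂ) + (U - 1) * (U + 1)⁻¹
        = (2:ℂ) • (U * (U + 1)⁻¹) := by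
      nth_rewrite 1 [← Matrix.mul_nonsing_inv _ hdet]
      rw [← Matrix.add_mul]
      have : (U + 1) + (U - 1) = (2:ℂ) • U := by
        rw [two_smul]; abel
      rw [this, Matrix.smul_mul]
    rw [h1m, h1p] at key
    have key2 := congrArg (fun X => X * (U + 1)) key
    simp only [Matrix.smul_mul, Matrix.mul_smul, Matrix.mul_assoc,
      Matrix.nonsing_inv_mul _ hdet, Matrix.mul_one] at key2
    have : γ 1 = U := by
      have h2 : (2:ℂ) ≠ 0 := two_ne_zero
      apply smul_right_injective (Matrix (Fin n) (Fin n) ℂ) h2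
      simpa using key2
    exact this
  -- continuity
  have hcont : Continuous γ := by
    apply Continuous.matrix_mul
    · apply Continuous.matrix_mul continuous_const
      apply Continuous.matrix_diagonal
      apply continuous_pi
      intro k
      apply Continuous.div
      · exact continuous_const.add ((Complex.continuous_ofReal.comp
          (continuous_id.mul continuous_const)).mul continuous_const)
      · exact continuous_const.sub ((Complex.continuous_ofReal.comp
          (continuous_id.mul continuous_const)).mul continuous_const)
      · intro s
        exact hden _
    · exact continuous_const
  exact ⟨⟨⟨fun t => γ t, hcont.comp continuous_subtype_val⟩, by simpa using hγ0,
    by simpa using hγ1⟩, fun t => hγmem t⟩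






lemma smul_mem_unitary {z : ℂ} (hz : ‖z‖ = 1) {U : Matrix (Fin n) (Fin n) ℂ}
    (hU : U ∈ Matrix.unitaryGroup (Fin n) ℂ) :
    z • U ∈ Matrix.unitaryGroup (Fin n) ℂ := by
  have hzz : (starRingEnd ℂ) z * z = 1 := by
    rw [mul_comm, Complex.mul_conj]
    norm_cast
    rw [Complex.normSq_eq_norm_sq, hz, one_pow]
  constructor
  · show star (z • U) * (z • U) = 1
    rw [star_smul, Matrix.smul_mul, Matrix.mul_smul, smul_smul]
    show ((starRingEnd ℂ) z * z) • (star U * U) = 1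
    rw [hzz, hU.1, one_smul]
  · show (z • U) * star (z • U) = 1
    rw [star_smul, Matrix.smul_mul, Matrix.mul_smul, smul_smul]
    show (z * (starRingEnd ℂ) z) • (U * star U) = 1
    rw [mul_comm, hzz, hU.2, one_smul]

lemma joined_one_all (U : Matrix (Fin n) (Fin n) ℂ)
    (hU : U ∈ Matrix.unitaryGroup (Fin n) ℂ) :
    JoinedIn (Matrix.unitaryGroup (Fin n) ℂ : Set (Matrix (Fin n) (Fin n) ℂ)) 1 U := by
  obtain ⟨z, hz1, hz2⟩ := exists_good_scalar U hU
  have hz0 : z ≠ 0 := by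
    intro h; rw [h] at hz1; simp at hz1
  have hzz : z * (starRingEnd ℂ) z = 1 := by
    rw [Complex.mul_conj]
    norm_cast
    rw [Complex.normSq_eq_norm_sq, hz1, one_pow]
  have hwabs : ‖(starRingEnd ℂ) z‖ = 1 := by rw [Complex.norm_conj, hz1]
  set V : Matrix (Fin n) (Fin n) ℂ := (starRingEnd ℂ) z • U with hV
  have hVmem : V ∈ Matrix.unitaryGroup (Fin n) ℂ := smul_mem_unitary hwabs hU
  have hVdet : IsUnit (V + 1 : Matrix (Fin n) (Fin n) ℂ).det := by
    have : (V + 1 : Matrix (Fin n) (Fin n) ℂ)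
        = (starRingEnd ℂ) z • (U + z • (1 : Matrix (Fin n) (Fin n) ℂ)) := by
      rw [smul_add, smul_smul, mul_comm, hzz, one_smul]
    rw [this, Matrix.det_smul]
    exact (IsUnit.pow _ (by simpa [isUnit_iff_ne_zero] using star_ne_zero.mpr hz0)).mul hz2
  have hj1 := joinedin_one V hVmem hVdet
  have hj2 : JoinedIn (Matrix.unitaryGroup (Fin n) ℂ : Set (Matrix (Fin n) (Fin n) ℂ)) V U := by
    set γ2 : ℝ → Matrix (Fin n) (Fin n) ℂ :=
      fun s => Complex.exp (((s * Complex.arg z : ℝ) : ℂ) * I) • V with hγ2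
    have hmem : ∀ s, γ2 s ∈ Matrix.unitaryGroup (Fin n) ℂ := fun s =>
      smul_mem_unitary (Complex.norm_exp_ofReal_mul_I _) hVmem
    have h0 : γ2 0 = V := by
      show Complex.exp (((0 * Complex.arg z : ℝ) : ℂ) * I) • V = V
      norm_num
    have h1 : γ2 1 = U := by
      show Complex.exp (((1 * Complex.arg z : ℝ) : ℂ) * I) • V = U
      rw [one_mul]
      have hexp : Complex.exp ((Complex.arg z : ℂ) * I) = z := by
        have := Complex.norm_mul_exp_arg_mul_I z
        rwa [hz1, Complex.ofReal_one, one_mul] at this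
      rw [hexp, hV, smul_smul, hzz, one_smul]
    have hcont : Continuous γ2 := by
      show Continuous fun s : ℝ => Complex.exp (((s * Complex.arg z : ℝ) : ℂ) * I) • V
      apply Continuous.fun_smul _ continuous_const
      exact Complex.continuous_exp.comp
        ((Complex.continuous_ofReal.comp (continuous_id.mul continuous_const)).mul
          continuous_const)
    exact ⟨⟨⟨fun t => γ2 t, hcont.comp continuous_subtype_val⟩, by simpa using h0,
      by simpa using h1⟩, fun t => hmem t⟩
  exact hj1.trans hj2

lemma unitary_pathConnected :
    IsPathConnected (Matrix.unitaryGroup (Fin n) ℂ : Set (Matrix (Fin n) (Fin n) ℂ)) :=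
  ⟨1, one_mem _, fun _ hU => joined_one_all _ hU⟩

lemma unitary_compact :
    IsCompact (Matrix.unitaryGroup (Fin n) ℂ : Set (Matrix (Fin n) (Fin n) ℂ)) := by
  have hT : IsCompact (Set.univ.pi fun _ : Fin n => Set.univ.pi fun _ : Fin n =>
      Metric.closedBall (0:ℂ) 1 : Set (Matrix (Fin n) (Fin n) ℂ)) :=
    isCompact_univ_pi fun _ => isCompact_univ_pi fun _ => isCompact_closedBall 0 1
  apply hT.of_isClosed_subset
  · have : (Matrix.unitaryGroup (Fin n) ℂ : Set (Matrix (Fin n) (Fin n) ℂ))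
        = {U : Matrix (Fin n) (Fin n) ℂ | star U * U = 1}
          ∩ {U : Matrix (Fin n) (Fin n) ℂ | U * star U = 1} := by
      ext U
      exact Unitary.mem_iff
    rw [this]
    have hc : Continuous fun U : Matrix (Fin n) (Fin n) ℂ => star U := by
      show Continuous fun U : Matrix (Fin n) (Fin n) ℂ => Uᴴ
      exact continuous_id.matrix_conjTranspose
    exact ((isClosed_eq (hc.matrix_mul continuous_id) continuous_const)).inter
      (isClosed_eq (continuous_id.matrix_mul hc) continuous_const)
  · intro (U : Matrix (Fin n) (Fin n) ℂ) hUm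
    have hU1 : star U * U = (1 : Matrix (Fin n) (Fin n) ℂ) := hUm.1
    intro i _
    intro j _
    have hcol : ∑ k, Complex.normSq (U k j) = 1 := by
      have := congrArg (fun M => M j j) hU1
      simp only [Matrix.mul_apply, Matrix.one_apply_eq] at this
      have h2 : ∑ k, ((Complex.normSq (U k j) : ℂ)) = 1 := by
        rw [← this]
        congr 1
        funext k
        rw [Matrix.star_apply, mul_comm, RCLike.star_def, Complex.mul_conj]
      exact_mod_cast h2
    have hle : Complex.normSq (U i j) ≤ 1 := by
      rw [← hcol]
      exact Finset.single_le_sum (f := fun k => Complex.normSq (U k j))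
        (fun k _ => Complex.normSq_nonneg _) (Finset.mem_univ i)
    have habs : ‖U i j‖ ≤ 1 := by
      rw [Complex.norm_def]
      calc Real.sqrt (Complex.normSq (U i j)) ≤ Real.sqrt 1 := Real.sqrt_le_sqrt hle
        _ = 1 := Real.sqrt_one
    simpa [Metric.mem_closedBall, Complex.dist_eq] using habs








lemma herm_trace_real {X Y : Matrix (Fin n) (Fin n) ℂ} (hX : X.IsHermitian)
    (hY : Y.IsHermitian) : (X * Y).trace = (((X * Y).trace.re : ℝ) : ℂ) := by
  have h : (starRingEnd ℂ) ((X * Y).trace) = (X * Y).trace := by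
    have h1 : star ((X * Y).trace) = ((X * Y)ᴴ).trace := (Matrix.trace_conjTranspose _).symm
    have h2 : (X * Y)ᴴ = Y * X := by rw [conjTranspose_mul, hX.eq, hY.eq]
    show star ((X * Y).trace) = (X * Y).trace
    rw [h1, h2, Matrix.trace_mul_comm]
  exact (Complex.conj_eq_iff_re.mp h).symm

lemma trace_conj_real {C H : Matrix (Fin n) (Fin n) ℂ} (hC : C.IsHermitian)
    (hH : H.IsHermitian) {U : Matrix (Fin n) (Fin n) ℂ}
    (hU : U ∈ Matrix.unitaryGroup (Fin n) ℂ) :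
    (C * (star U * H * U)).trace = (((C * (star U * H * U)).trace.re : ℝ) : ℂ) := by
  have : (star U * H * U).IsHermitian := by
    rw [Matrix.star_eq_conjTranspose]
    exact Matrix.isHermitian_conjTranspose_mul_mul U hH
  exact herm_trace_real hC this

lemma backward_dir (hn : 0 < n) (hm : 0 < m)
    (C : Matrix (Fin n) (Fin n) ℂ) (hC : C.IsHermitian)
    (A : Fin m → Matrix (Fin n) (Fin n) ℂ)
    (H : Matrix (Fin n) (Fin n) ℂ) (hH : H.IsHermitian)
    (hA : ∀ j, ∃ α β : ℂ, A j = α • (1 : Matrix (Fin n) (Fin n) ℂ) + β • H) :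
    ∃ p q : Fin m → ℂ, jointCNumRange C A = segment ℝ p q := by
  classical
  choose α β hαβ using hA
  set g : Matrix (Fin n) (Fin n) ℂ → ℝ := fun U => ((C * (star U * H * U)).trace).re with hg
  have hgc : Continuous g := by
    apply Complex.continuous_re.comp
    apply Continuous.matrix_trace
    apply Continuous.matrix_mul continuous_const
    show Continuous fun U : Matrix (Fin n) (Fin n) ℂ => Uᴴ * H * U
    exact (continuous_id.matrix_conjTranspose.matrix_mul continuous_const).matrix_mul
      continuous_id
  set S' : Set ℝ := g '' (Matrix.unitaryGroup (Fin n) ℂ : Set (Matrix (Fin n) (Fin n) ℂ))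
    with hS'
  have hconn : IsConnected S' :=
    (unitary_pathConnected.isConnected).image g hgc.continuousOn
  have hcmp : IsCompact S' := unitary_compact.image hgc
  set a : ℝ := sInf S' with ha
  set b : ℝ := sSup S' with hb
  have hIcc : S' = Set.Icc a b := eq_Icc_of_connected_compact hconn hcmp
  have hone : g 1 ∈ S' := ⟨1, one_mem _, rfl⟩
  have hab : a ≤ b := by
    rw [hIcc] at hone
    exact hone.1.trans hone.2
  -- trace computation
  have hcomp : ∀ U ∈ Matrix.unitaryGroup (Fin n) ℂ, ∀ j,
      (C * (star U * A j * U)).trace = α j * C.trace + β j * ((g U : ℝ) : ℂ) := by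
    intro U hU j
    have hU1 : star U * U = 1 := hU.1
    have h1 : star U * A j * U
        = α j • (1 : Matrix (Fin n) (Fin n) ℂ) + β j • (star U * H * U) := by
      rw [hαβ j, Matrix.mul_add, Matrix.add_mul, Matrix.mul_smul, Matrix.smul_mul,
        Matrix.mul_smul, Matrix.smul_mul, Matrix.mul_one, hU1]
    rw [h1, Matrix.mul_add, Matrix.mul_smul, Matrix.mul_smul, Matrix.mul_one, trace_add,
      trace_smul, trace_smul, smul_eq_mul, smul_eq_mul]
    congr 1
    rw [hg]
    congr 1
    exact trace_conj_real hC hH hU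
  refine ⟨fun j => α j * C.trace + β j * (a : ℂ), fun j => α j * C.trace + β j * (b : ℂ), ?_⟩
  ext z
  constructor
  · rintro ⟨U, hU, hz⟩
    have ht : g U ∈ Set.Icc a b := by
      rw [← hIcc]
      exact ⟨U, hU, rfl⟩
    rw [← segment_eq_Icc hab] at ht
    obtain ⟨u, v, hu, hv, huv, hts⟩ := ht
    refine ⟨u, v, hu, hv, huv, ?_⟩
    funext j
    have hz' := hz j
    rw [hcomp U hU j] at hz'
    have huv' : (u : ℂ) + (v : ℂ) = 1 := by exact_mod_cast huv
    have hts' : (u : ℂ) * (a : ℂ) + (v : ℂ) * (b : ℂ) = ((g U : ℝ) : ℂ) := by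
      exact_mod_cast congrArg (fun x : ℝ => (x : ℂ)) hts
    simp only [Pi.add_apply, Pi.smul_apply, smul_eq_mul, Complex.real_smul]
    rw [hz']
    linear_combination (α j * C.trace) * huv' + β j * hts'
  · rintro ⟨u, v, hu, hv, huv, heq⟩
    have ht : u * a + v * b ∈ Set.Icc a b := by
      rw [← segment_eq_Icc hab]
      exact ⟨u, v, hu, hv, huv, rfl⟩
    rw [← hIcc] at ht
    obtain ⟨U, hU, hgU⟩ := ht
    refine ⟨U, hU, fun j => ?_⟩
    rw [hcomp U hU j]
    have hj := congrFun heq j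
    simp only [Pi.add_apply, Pi.smul_apply, smul_eq_mul, Complex.real_smul] at hj
    rw [← hj]
    have huv' : (u : ℂ) + (v : ℂ) = 1 := by exact_mod_cast huv
    have hgU' : ((g U : ℝ) : ℂ) = (u : ℂ) * (a : ℂ) + (v : ℂ) * (b : ℂ) := by
      exact_mod_cast congrArg (fun x : ℝ => (x : ℂ)) hgU
    linear_combination (α j * C.trace) * huv' + (β j) * hgU'.symm






lemma forward_dir (hn : 0 < n) (hm : 0 < m)
    (C : Matrix (Fin n) (Fin n) ℂ) (hC : C.IsHermitian)
    (hCns : ∀ a : ℝ, C ≠ (a : ℂ) • (1 : Matrix (Fin n) (Fin n) ℂ))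
    (A : Fin m → Matrix (Fin n) (Fin n) ℂ) (p q : Fin m → ℂ)
    (hseg : jointCNumRange C A = segment ℝ p q) :
    ∃ H : Matrix (Fin n) (Fin n) ℂ, H.IsHermitian ∧
      ∀ j, ∃ α β : ℂ, A j = α • (1 : Matrix (Fin n) (Fin n) ℂ) + β • H := by
  classical
  set φ : (Fin m → ℂ) → ℝ := fun w => ∑ j, ((starRingEnd ℂ) (w j) * (q j - p j)).re with hφ
  set B : (Fin m → ℂ) → Matrix (Fin n) (Fin n) ℂ :=
    fun w => ∑ j, (starRingEnd ℂ) (w j) • A j with hB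
  set Hp : (Fin m → ℂ) → Matrix (Fin n) (Fin n) ℂ :=
    fun w => (2⁻¹ : ℂ) • (B w + (B w)ᴴ) with hHp
  have hHpherm : ∀ w, (Hp w).IsHermitian := by
    intro w
    show ((2⁻¹ : ℂ) • (B w + (B w)ᴴ))ᴴ = (2⁻¹ : ℂ) • (B w + (B w)ᴴ)
    rw [Matrix.conjTranspose_smul, Matrix.conjTranspose_add, conjTranspose_conjTranspose]
    have : (starRingEnd ℂ) (2⁻¹ : ℂ) = (2⁻¹ : ℂ) := by
      rw [map_inv₀, map_ofNat]
    rw [show star (2⁻¹ : ℂ) = (starRingEnd ℂ) (2⁻¹ : ℂ) from rfl, this, add_comm]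
  -- key: if φ w = 0 then Hp w is scalar
  have key : ∀ w : Fin m → ℂ, φ w = 0 → ∃ r : ℝ, Hp w = (r : ℂ) • 1 := by
    intro w hw
    apply const_trace_scalar hn hC hCns (hHpherm w)
      ((2⁻¹ : ℂ) * ((∑ j, (starRingEnd ℂ) (w j) * p j)
        + (starRingEnd ℂ) (∑ j, (starRingEnd ℂ) (w j) * p j)))
    intro U hU
    set z : Fin m → ℂ := fun j => (C * (star U * A j * U)).trace with hz
    have hzmem : z ∈ jointCNumRange C A := ⟨U, hU, fun j => rfl⟩
    rw [hseg] at hzmem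
    obtain ⟨u, v, hu, hv, huv, hcomb⟩ := hzmem
    have huv' : (u : ℂ) + (v : ℂ) = 1 := by exact_mod_cast huv
    have hzj : ∀ j, z j = (u : ℂ) * p j + (v : ℂ) * q j := by
      intro j
      have := congrFun hcomb j
      simp only [Pi.add_apply, Pi.smul_apply, smul_eq_mul, Complex.real_smul] at this
      exact this.symm
    set T : ℂ := ∑ j, (starRingEnd ℂ) (w j) * z j with hT
    set Sp : ℂ := ∑ j, (starRingEnd ℂ) (w j) * p j with hSp
    set Sq : ℂ := ∑ j, (starRingEnd ℂ) (w j) * q j with hSq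
    set Sd : ℂ := ∑ j, (starRingEnd ℂ) (w j) * (q j - p j) with hSd
    have hTB : (C * (star U * B w * U)).trace = T := by
      rw [hB, hT]
      show (C * (star U * (∑ j, (starRingEnd ℂ) (w j) • A j) * U)).trace = _
      simp only [Matrix.mul_sum, Matrix.sum_mul, Matrix.mul_smul, Matrix.smul_mul,
        Matrix.trace_sum, Matrix.trace_smul, smul_eq_mul, hz, Matrix.mul_assoc]
    have hTBH : (C * (star U * (B w)ᴴ * U)).trace = (starRingEnd ℂ) T := by
      rw [← hTB]
      show _ = (starRingEnd ℂ) ((C * (star U * B w * U)).trace)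
      have e : (C * (star U * B w * U))ᴴ = (star U * (B w)ᴴ * U) * C := by
        simp only [Matrix.conjTranspose_mul, conjTranspose_conjTranspose,
          Matrix.star_eq_conjTranspose, hC.eq, Matrix.mul_assoc]
      have h1 : (starRingEnd ℂ) ((C * (star U * B w * U)).trace)
          = ((C * (star U * B w * U))ᴴ).trace := (Matrix.trace_conjTranspose _).symm
      rw [h1, e, Matrix.trace_mul_comm]
    -- trace of Hp
    have htr : (C * (star U * Hp w * U)).trace = (2⁻¹ : ℂ) * (T + (starRingEnd ℂ) T) := by
      have h1 : star U * Hp w * U = (2⁻¹ : ℂ) • (star U * B w * U + star U * (B w)ᴴ * U) := by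
        show star U * ((2⁻¹ : ℂ) • (B w + (B w)ᴴ)) * U = _
        rw [Matrix.mul_smul, Matrix.smul_mul, Matrix.mul_add, Matrix.add_mul]
      rw [h1, Matrix.mul_smul, trace_smul, Matrix.mul_add, trace_add, hTB, hTBH, smul_eq_mul]
    rw [htr]
    -- now show T + conj T = Sp + conj Sp
    have hT2 : T = (u : ℂ) * Sp + (v : ℂ) * Sq := by
      rw [hT, hSp, hSq, Finset.mul_sum, Finset.mul_sum, ← Finset.sum_add_distrib]
      refine Finset.sum_congr rfl fun j _ => ?_
      rw [hzj j]; ring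
    have hSq2 : Sq = Sp + Sd := by
      rw [hSp, hSq, hSd, ← Finset.sum_add_distrib]
      refine Finset.sum_congr rfl fun j _ => ?_
      ring
    have hSd0 : Sd + (starRingEnd ℂ) Sd = 0 := by
      have hre : Sd.re = 0 := by
        rw [hSd, Complex.re_sum]
        exact hw
      rw [Complex.add_conj, hre]
      simp
    have hcT : (starRingEnd ℂ) T = (u : ℂ) * (starRingEnd ℂ) Sp + (v : ℂ) * (starRingEnd ℂ) Sq := by
      rw [hT2]
      simp only [map_add, _root_.map_mul, Complex.conj_ofReal]
    have hcSq : (starRingEnd ℂ) Sq = (starRingEnd ℂ) Sp + (starRingEnd ℂ) Sd := by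
      rw [hSq2, map_add]
    congr 1
    linear_combination hT2 + hcT + (v : ℂ) * hSq2 + (v : ℂ) * hcSq + (v : ℂ) * hSd0
      + (Sp + (starRingEnd ℂ) Sp) * huv'
  -- main structural claim
  have main : ∃ H : Matrix (Fin n) (Fin n) ℂ, H.IsHermitian ∧
      ∀ w, ∃ r t : ℝ, Hp w = (r : ℂ) • 1 + (t : ℂ) • H := by
    by_cases hex : ∃ w₀, φ w₀ ≠ 0
    · obtain ⟨w₀, hw₀⟩ := hex
      refine ⟨Hp w₀, hHpherm w₀, fun w => ?_⟩
      set t : ℝ := φ w / φ w₀ with htdef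
      have hφlin : φ (w - t • w₀) = φ w - t * φ w₀ := by
        simp only [hφ, Pi.sub_apply, Pi.smul_apply, Complex.real_smul, map_sub,
          _root_.map_mul, Complex.conj_ofReal, sub_mul, Complex.sub_re,
          Finset.sum_sub_distrib, Finset.mul_sum, mul_assoc, Complex.re_ofReal_mul]
      have hφ0 : φ (w - t • w₀) = 0 := by
        rw [hφlin, htdef, div_mul_cancel₀ _ hw₀, sub_self]
      have hBlin : B (w - t • w₀) = B w - (t : ℂ) • B w₀ := by
        simp only [hB, Pi.sub_apply, Pi.smul_apply, Complex.real_smul, map_sub,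
          _root_.map_mul, Complex.conj_ofReal, sub_smul, smul_smul,
          Finset.sum_sub_distrib, Finset.smul_sum]
      have hHplin : Hp (w - t • w₀) = Hp w - (t : ℂ) • Hp w₀ := by
        show (2⁻¹ : ℂ) • (B (w - t • w₀) + (B (w - t • w₀))ᴴ)
            = (2⁻¹ : ℂ) • (B w + (B w)ᴴ) - (t : ℂ) • ((2⁻¹ : ℂ) • (B w₀ + (B w₀)ᴴ))
        rw [hBlin, Matrix.conjTranspose_sub, Matrix.conjTranspose_smul]
        rw [show star ((t : ℝ) : ℂ) = ((t : ℝ) : ℂ) from Complex.conj_ofReal t]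
        module
      obtain ⟨r, hr⟩ := key _ hφ0
      refine ⟨r, t, ?_⟩
      rw [← hr, hHplin]
      abel
    · push_neg at hex
      refine ⟨0, Matrix.isHermitian_zero, fun w => ?_⟩
      obtain ⟨r, hr⟩ := key w (hex w)
      exact ⟨r, 0, by rw [hr]; simp⟩
  obtain ⟨H, hH, hclaim⟩ := main
  refine ⟨H, hH, fun j => ?_⟩
  set w1 : Fin m → ℂ := fun k => if k = j then 1 else 0 with hw1
  set w2 : Fin m → ℂ := fun k => if k = j then Complex.I else 0 with hw2
  have hBw1 : B w1 = A j := by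
    show (∑ k, (starRingEnd ℂ) (w1 k) • A k) = A j
    rw [hw1]
    simp only [apply_ite (starRingEnd ℂ), _root_.map_one, _root_.map_zero, ite_smul,
      zero_smul, one_smul]
    rw [Finset.sum_ite_eq' Finset.univ j A]
    simp
  have hBw2 : B w2 = (-Complex.I) • A j := by
    show (∑ k, (starRingEnd ℂ) (w2 k) • A k) = (-Complex.I) • A j
    rw [hw2]
    simp only [apply_ite (starRingEnd ℂ), _root_.map_zero, Complex.conj_I, ite_smul,
      zero_smul]
    rw [Finset.sum_ite_eq' Finset.univ j (fun k => (-Complex.I) • A k)]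
    simp
  have hrecon : A j = Hp w1 + Complex.I • Hp w2 := by
    show A j = (2⁻¹ : ℂ) • (B w1 + (B w1)ᴴ) + Complex.I • ((2⁻¹ : ℂ) • (B w2 + (B w2)ᴴ))
    rw [hBw1, hBw2, Matrix.conjTranspose_smul]
    rw [show star (-Complex.I) = Complex.I by simp]
    match_scalars <;> (ring_nf; simp [Complex.I_sq]; try ring)
  obtain ⟨r1, t1, h1⟩ := hclaim w1
  obtain ⟨r2, t2, h2⟩ := hclaim w2
  refine ⟨(r1 : ℂ) + Complex.I * (r2 : ℂ), (t1 : ℂ) + Complex.I * (t2 : ℂ), ?_⟩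
  rw [hrecon, h1, h2]
  module

end Aux

theorem stmt_10 {n m : ℕ} (hn : 0 < n) (hm : 0 < m)
    (C : Matrix (Fin n) (Fin n) ℂ) (hC : C.IsHermitian)
    (hCns : ∀ a : ℝ, C ≠ (a : ℂ) • (1 : Matrix (Fin n) (Fin n) ℂ))
    (A : Fin m → Matrix (Fin n) (Fin n) ℂ) :
    (∃ p q : Fin m → ℂ, jointCNumRange C A = segment ℝ p q) ↔
      (∃ H : Matrix (Fin n) (Fin n) ℂ, H.IsHermitian ∧
        ∀ j, ∃ α β : ℂ, A j = α • (1 : Matrix (Fin n) (Fin n) ℂ) + β • H) := by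
  constructor
  · rintro ⟨p, q, hseg⟩
    exact forward_dir hn hm C hC hCns A p q hseg
  · rintro ⟨H, hH, hA⟩
    exact backward_dir hn hm C hC A H hH hA
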